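/- arXiv:1803.01340 — 2 statements merged into one kernel-verified Lean document; each statement's English description precedes it below -/
import Mathlib

section
/- Let G be a locally compact Hausdorff topological group with left Haar measure μ, U₀ a compact neighborhood of the identity, f : G → ℂ continuous, K ⊆ G compact, and ε > 0. Then there exists a neighborhood V of the identity in G such that for every compact neighborhood U ⊆ U₀ of the identity, every U-mollifier η, and all t₁, t₂ ∈ K with t₁⁻¹·t₂ ∈ V, one has |(η * f)(t₁) − (η * f)(t₂)| < ε; i.e., the family {η * f} is equicontinuous on K. -/
open scoped Topology
open MeasureTheory Pointwise

/-- Equicontinuity on compacta of the mollified family: given a compact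
neighborhood `U₀` of the identity, a continuous `f : G → ℂ`, a compact `K ⊆ G`
and `ε > 0`, there is a neighborhood `V` of the identity such that for every
compact neighborhood `U ⊆ U₀` of the identity, every `U`-mollifier `η` and all
`t₁, t₂ ∈ K` with `t₁⁻¹·t₂ ∈ V`, `|(η * f)(t₁) − (η * f)(t₂)| < ε`. -/
theorem mollifier_convolution_equicontinuous
    (G : Type*) [Group G] [TopologicalSpace G] [IsTopologicalGroup G]
    [LocallyCompactSpace G] [T2Space G]
    [MeasurableSpace G] [BorelSpace G]
    (μ : Measure G) [μ.IsHaarMeasure]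
    (U₀ : Set G) (hU₀c : IsCompact U₀) (hU₀1 : U₀ ∈ 𝓝 (1 : G))
    (f : G → ℂ) (hf : Continuous f)
    (K : Set G) (hK : IsCompact K) (ε : ℝ) (hε : 0 < ε) :
    ∃ V ∈ 𝓝 (1 : G),
      ∀ U : Set G, IsCompact U → U ∈ 𝓝 (1 : G) → U ⊆ U₀ →
      ∀ η : G → ℝ, Continuous η → tsupport η ⊆ U → (∀ x, 0 ≤ η x) →
        (∫ x, η x ∂μ) = 1 →
      ∀ t₁ ∈ K, ∀ t₂ ∈ K, t₁⁻¹ * t₂ ∈ V →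
        ‖(∫ s, (η s : ℂ) * f (s⁻¹ * t₁) ∂μ)
          - ∫ s, (η s : ℂ) * f (s⁻¹ * t₂) ∂μ‖ < ε := by
  -- The compact set where the "left translates" `s⁻¹ * t₁` live.
  set L : Set G := U₀⁻¹ * K with hL
  have hLc : IsCompact L := hU₀c.inv.mul hK
  -- The open set of pairs `(x, v)` with `‖f (x * v) - f x‖ < ε/2`.
  set W : Set (G × G) := {p : G × G | ‖f (p.1 * p.2) - f p.1‖ < ε / 2} with hW
  have hWopen : IsOpen W := by
    have : Continuous fun p : G × G => ‖f (p.1 * p.2) - f p.1‖ := by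
      fun_prop
    exact isOpen_lt this continuous_const
  have hLW : L ×ˢ ({1} : Set G) ⊆ W := by
    rintro ⟨x, v⟩ ⟨hx, hv⟩
    simp only [Set.mem_singleton_iff] at hv
    simp [hW, hv, half_pos hε]
  obtain ⟨A, V, hAopen, hVopen, hLA, h1V, hAV⟩ :=
    generalized_tube_lemma hLc isCompact_singleton hWopen hLW
  refine ⟨V, hVopen.mem_nhds (h1V rfl), ?_⟩
  intro U hUc hU1 hUU₀ η hηcont hηsupp hηnn hηint t₁ ht₁ t₂ ht₂ htV
  -- compact support facts
  have hηcs : HasCompactSupport η := HasCompactSupport.of_support_subset_isCompact hUc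
    (subset_trans (subset_tsupport η) hηsupp)
  have hηcsC : HasCompactSupport fun s => (η s : ℂ) :=
    hηcs.comp_left (g := fun r : ℝ => (r : ℂ)) (by simp)
  have hint : ∀ t : G, Integrable (fun s => (η s : ℂ) * f (s⁻¹ * t)) μ := by
    intro t
    have hcs : HasCompactSupport fun s => (η s : ℂ) * f (s⁻¹ * t) :=
      hηcsC.mul_right (f' := fun s => f (s⁻¹ * t))
    exact (by fun_prop : Continuous fun s => (η s : ℂ) * f (s⁻¹ * t)).integrable_of_hasCompactSupport hcs
  have hint₁ := hint t₁
  have hint₂ := hint t₂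
  rw [← integral_sub hint₁ hint₂]
  have hkey : ∀ s : G, ‖(η s : ℂ) * f (s⁻¹ * t₁) - (η s : ℂ) * f (s⁻¹ * t₂)‖
      ≤ η s * (ε / 2) := by
    intro s
    by_cases hs : s ∈ tsupport η
    · have hsU₀ : s ∈ U₀ := hUU₀ (hηsupp hs)
      have hxL : s⁻¹ * t₁ ∈ L := Set.mul_mem_mul (Set.inv_mem_inv.mpr hsU₀) ht₁
      have hmem : (s⁻¹ * t₁, t₁⁻¹ * t₂) ∈ W := hAV ⟨hLA hxL, htV⟩
      have : ‖f (s⁻¹ * t₁ * (t₁⁻¹ * t₂)) - f (s⁻¹ * t₁)‖ < ε / 2 := hmem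
      rw [show s⁻¹ * t₁ * (t₁⁻¹ * t₂) = s⁻¹ * t₂ by group] at this
      calc ‖(η s : ℂ) * f (s⁻¹ * t₁) - (η s : ℂ) * f (s⁻¹ * t₂)‖
          = η s * ‖f (s⁻¹ * t₂) - f (s⁻¹ * t₁)‖ := by
            rw [← mul_sub, norm_mul, norm_sub_rev]
            simp [abs_of_nonneg (hηnn s)]
        _ ≤ η s * (ε / 2) := by
            exact mul_le_mul_of_nonneg_left this.le (hηnn s)
    · have : η s = 0 := image_eq_zero_of_notMem_tsupport hs
      simp [this, mul_nonneg (le_of_lt (half_pos hε)) le_rfl,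
        le_of_lt (half_pos hε)]
  have hbint : Integrable (fun s => η s * (ε / 2)) μ := by
    have hcs : HasCompactSupport fun s => η s * (ε / 2) :=
      hηcs.mul_right (f' := fun _ => ε / 2)
    exact (by fun_prop : Continuous fun s => η s * (ε / 2)).integrable_of_hasCompactSupport hcs
  have hle : ‖∫ s, ((η s : ℂ) * f (s⁻¹ * t₁) - (η s : ℂ) * f (s⁻¹ * t₂)) ∂μ‖
      ≤ ∫ s, η s * (ε / 2) ∂μ := by
    refine norm_integral_le_of_norm_le hbint (Filter.Eventually.of_forall hkey)
  have : (∫ s, η s * (ε / 2) ∂μ) = ε / 2 := by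
    rw [integral_mul_const, hηint, one_mul]
  calc ‖∫ s, ((η s : ℂ) * f (s⁻¹ * t₁) - (η s : ℂ) * f (s⁻¹ * t₂)) ∂μ‖
      ≤ ε / 2 := this ▸ hle
    _ < ε := half_lt_self hε
end

section
/- Let G be a locally compact Hausdorff topological group with left Haar measure μ, U₀ a compact neighborhood of the identity, and f : G → ℂ continuous. Then the set {η * f : U ⊆ U₀ a compact neighborhood of the identity, η a U-mollifier} has compact closure in C(G) equipped with the compact-open topology. -/
open scoped Topology
open MeasureTheory Set

section Aux

variable {G : Type*} [TopologicalSpace G] [T2Space G]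
    [MeasurableSpace G] [OpensMeasurableSpace G]
    (μ : Measure G) [IsFiniteMeasureOnCompacts μ]

lemma aux_integrable {η : G → ℝ} (hηc : Continuous η) (hηs : HasCompactSupport η)
    {c : G → ℂ} (hc : Continuous c) :
    Integrable (fun s => (η s : ℂ) * c s) μ := by
  apply Continuous.integrable_of_hasCompactSupport (by fun_prop)
  have : HasCompactSupport (fun s => ((η s : ℝ) : ℂ)) :=
    hηs.comp_left (g := Complex.ofReal) Complex.ofReal_zero
  exact this.mul_right

lemma aux_integrable_real {η : G → ℝ} (hηc : Continuous η) (hηs : HasCompactSupport η)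
    {c : G → ℝ} (hc : Continuous c) :
    Integrable (fun s => η s * c s) μ := by
  apply Continuous.integrable_of_hasCompactSupport (by fun_prop)
  exact hηs.mul_right

lemma aux_bound {η : G → ℝ} (hηc : Continuous η) (hηs : HasCompactSupport η)
    (hη0 : ∀ x, 0 ≤ η x) (hη1 : (∫ x, η x ∂μ) = 1)
    {c : G → ℂ} (hc : Continuous c) {M : ℝ}
    (hM : ∀ s ∈ tsupport η, ‖c s‖ ≤ M) :
    ‖∫ s, (η s : ℂ) * c s ∂μ‖ ≤ M := by
  calc ‖∫ s, (η s : ℂ) * c s ∂μ‖ ≤ ∫ s, ‖(η s : ℂ) * c s‖ ∂μ :=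
        norm_integral_le_integral_norm _
    _ ≤ ∫ s, η s * M ∂μ := by
        apply integral_mono ((aux_integrable μ hηc hηs hc).norm)
          (aux_integrable_real μ hηc hηs continuous_const)
        intro s
        by_cases hs : s ∈ tsupport η
        · simp only [norm_mul, Complex.norm_real, Real.norm_eq_abs, abs_of_nonneg (hη0 s)]
          exact mul_le_mul_of_nonneg_left (hM s hs) (hη0 s)
        · have : η s = 0 := image_eq_zero_of_notMem_tsupport hs
          simp [this]
    _ = M := by rw [integral_mul_const, hη1, one_mul]

end Aux

/-- Total boundedness of the mollified family: for a compact neighborhood `U₀`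
of the identity and a continuous `f : G → ℂ`, the set
`{η * f : U ⊆ U₀ a compact neighborhood of 1, η a U-mollifier}` has compact
closure in `C(G)` with the compact-open topology. -/
theorem mollifier_convolution_totally_bounded
    (G : Type*) [Group G] [TopologicalSpace G] [IsTopologicalGroup G]
    [LocallyCompactSpace G] [T2Space G]
    [MeasurableSpace G] [BorelSpace G]
    (μ : Measure G) [μ.IsHaarMeasure]
    (U₀ : Set G) (hU₀c : IsCompact U₀) (hU₀1 : U₀ ∈ 𝓝 (1 : G))
    (f : G → ℂ) (hf : Continuous f) :
    IsCompact (closure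
      {g : C(G, ℂ) | ∃ U : Set G, IsCompact U ∧ U ∈ 𝓝 (1 : G) ∧ U ⊆ U₀ ∧
        ∃ η : G → ℝ, Continuous η ∧ tsupport η ⊆ U ∧ (∀ x, 0 ≤ η x) ∧
          (∫ x, η x ∂μ) = 1 ∧
          ∀ t, g t = ∫ s, (η s : ℂ) * f (s⁻¹ * t) ∂μ}) := by
  set S : Set C(G, ℂ) :=
      {g : C(G, ℂ) | ∃ U : Set G, IsCompact U ∧ U ∈ 𝓝 (1 : G) ∧ U ⊆ U₀ ∧
        ∃ η : G → ℝ, Continuous η ∧ tsupport η ⊆ U ∧ (∀ x, 0 ≤ η x) ∧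
          (∫ x, η x ∂μ) = 1 ∧
          ∀ t, g t = ∫ s, (η s : ℂ) * f (s⁻¹ * t) ∂μ} with hS
  -- the curried translate map
  haveI : CompactSpace U₀ := isCompact_iff_compactSpace.mp hU₀c
  let k : C(G × U₀, ℂ) := ⟨fun p => f ((p.2 : G)⁻¹ * p.1), by fun_prop⟩
  let Φ : C(G, C(U₀, ℂ)) := k.curry
  have eqcont : Equicontinuous (fun g : S => ((g : C(G, ℂ)) : G → ℂ)) := by
    intro x
    rw [Metric.equicontinuousAt_iff_right]
    intro ε hε
    have hΦ : ∀ᶠ y in 𝓝 x, dist (Φ y) (Φ x) < ε / 2 :=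
      Metric.tendsto_nhds.mp (Φ.continuous.tendsto x) (ε / 2) (by positivity)
    filter_upwards [hΦ] with y hy g
    obtain ⟨U, hUc, hU1, hUU₀, η, hηc, hηsupp, hη0, hη1, hg⟩ := g.2
    have hηcs : HasCompactSupport η :=
      IsCompact.of_isClosed_subset hU₀c (isClosed_tsupport η) (hηsupp.trans hUU₀)
    have h1 : Integrable (fun s => (η s : ℂ) * f (s⁻¹ * x)) μ :=
      aux_integrable μ hηc hηcs (by fun_prop)
    have h2 : Integrable (fun s => (η s : ℂ) * f (s⁻¹ * y)) μ :=
      aux_integrable μ hηc hηcs (by fun_prop)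
    have hd : (g : C(G,ℂ)) x - (g : C(G,ℂ)) y
        = ∫ s, (η s : ℂ) * (f (s⁻¹ * x) - f (s⁻¹ * y)) ∂μ := by
      rw [hg x, hg y, ← integral_sub h1 h2]
      simp [mul_sub]
    rw [dist_eq_norm, hd]
    have hb : ‖∫ s, (η s : ℂ) * (f (s⁻¹ * x) - f (s⁻¹ * y)) ∂μ‖ ≤ ε / 2 := by
      apply aux_bound μ hηc hηcs hη0 hη1 (by fun_prop)
      intro s hs
      have hsU₀ : s ∈ U₀ := hUU₀ (hηsupp hs)
      calc ‖f (s⁻¹ * x) - f (s⁻¹ * y)‖ = dist (Φ x ⟨s, hsU₀⟩) (Φ y ⟨s, hsU₀⟩) := by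
              simp [Φ, k, ContinuousMap.curry, dist_eq_norm]
        _ ≤ dist (Φ x) (Φ y) := ContinuousMap.dist_apply_le_dist _
        _ ≤ ε / 2 := by rw [dist_comm]; exact le_of_lt hy
    linarith [hb]
  -- closed embedding into UniformOnFun
  have hclemb : Topology.IsClosedEmbedding
      (UniformOnFun.ofFun {K : Set G | IsCompact K} ∘ (DFunLike.coe : C(G, ℂ) → G → ℂ)) := by
    refine ⟨ContinuousMap.isUniformEmbedding_toUniformOnFunIsCompact.isEmbedding, ?_⟩
    have : range (UniformOnFun.ofFun {K : Set G | IsCompact K} ∘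
        (DFunLike.coe : C(G, ℂ) → G → ℂ)) = range ContinuousMap.toUniformOnFunIsCompact := rfl
    rw [this, ContinuousMap.range_toUniformOnFunIsCompact]
    exact UniformOnFun.isClosed_setOf_continuous CompactlyCoherentSpace.isCoherentWith
  apply ArzelaAscoli.isCompact_closure_of_isClosedEmbedding (fun K hK => hK) hclemb
  · exact fun K _ => (eqcont.equicontinuousOn K)
  · -- pointwise compactness
    intro K hK x hx
    obtain ⟨s₀, hs₀U₀, hs₀max⟩ := hU₀c.exists_isMaxOn ⟨1, mem_of_mem_nhds hU₀1⟩
      ((hf.comp (by fun_prop : Continuous fun s : G => s⁻¹ * x)).norm.continuousOn)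
    refine ⟨Metric.closedBall 0 ‖f (s₀⁻¹ * x)‖, isCompact_closedBall _ _, ?_⟩
    intro g hg
    obtain ⟨U, hUc, hU1, hUU₀, η, hηc, hηsupp, hη0, hη1, hgeq⟩ := hg
    have hηcs : HasCompactSupport η :=
      IsCompact.of_isClosed_subset hU₀c (isClosed_tsupport η) (hηsupp.trans hUU₀)
    rw [Metric.mem_closedBall, dist_zero_right, hgeq x]
    exact aux_bound μ hηc hηcs hη0 hη1 (by fun_prop)
      (fun s hs => hs₀max (hUU₀ (hηsupp hs)))
end
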